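/- If (u, v) ∈ E is an edge with φ_h(u) > φ_h(v), then v is not contained in any locally h-clique densest subgraph of G, i.e., there is no LhCDS G[S] of G with v ∈ S. -/

import Mathlib

open Finset

variable {V : Type*} [Fintype V] [DecidableEq V]

/-- `Ψ_h(G[S])`: the set of `h`-cliques of `G` all of whose vertices lie in `S`
(equivalently, the `h`-cliques of the induced subgraph `G[S]`). -/
def cliquesIn (G : SimpleGraph V) [DecidableRel G.Adj] (h : ℕ) (S : Finset V) :
    Finset (Finset V) :=
  Finset.univ.filter fun c => G.IsNClique h c ∧ c ⊆ S

/-- the `h`-clique density `d_h(G[S]) = |Ψ_h(G[S])| / |S|`. -/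
noncomputable def cliqueDensity (G : SimpleGraph V) [DecidableRel G.Adj] (h : ℕ)
    (S : Finset V) : ℝ :=
  ((cliquesIn G h S).card : ℝ) / (S.card : ℝ)

/-- `G[S]` is `h`-clique `ρ`-compact: `S` is nonempty, the induced subgraph is
connected, and removing any nonempty `U ⊆ S` removes at least `ρ·|U|` `h`-cliques. -/
def IsCliqueCompact (G : SimpleGraph V) [DecidableRel G.Adj] (h : ℕ) (ρ : ℝ)
    (S : Finset V) : Prop :=
  S.Nonempty ∧ (G.induce (S : Set V)).Connected ∧
    ∀ U ⊆ S, U.Nonempty →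
      ρ * (U.card : ℝ) ≤ ((cliquesIn G h S).card : ℝ) - ((cliquesIn G h (S \ U)).card : ℝ)

/-- `G[S]` is a locally `h`-clique densest subgraph of `G`. -/
def IsLhCDS (G : SimpleGraph V) [DecidableRel G.Adj] (h : ℕ) (S : Finset V) : Prop :=
  IsCliqueCompact G h (cliqueDensity G h S) S ∧
    ¬ ∃ S' : Finset V, S ⊂ S' ∧ IsCliqueCompact G h (cliqueDensity G h S) S'

/-- the `h`-clique compact number `φ_h(u)` of a vertex `u`. -/
noncomputable def compactNumber (G : SimpleGraph V) [DecidableRel G.Adj] (h : ℕ)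
    (u : V) : ℝ :=
  sSup {ρ : ℝ | 0 ≤ ρ ∧ ∃ S : Finset V, u ∈ S ∧ IsCliqueCompact G h ρ S}

/-- `α` is a feasible solution to the convex program `CP(G,h)`: each `h`-clique
distributes a unit weight, nonnegatively, among its vertices. -/
def CPFeasible (G : SimpleGraph V) [DecidableRel G.Adj] (h : ℕ)
    (α : Finset V → V → ℝ) : Prop :=
  (∀ ψ ∈ cliquesIn G h Finset.univ, ∀ u ∈ ψ, 0 ≤ α ψ u) ∧
    (∀ ψ ∈ cliquesIn G h Finset.univ, ∑ u ∈ ψ, α ψ u = 1)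

/-- `r(u)`: the total weight received by vertex `u` under `α`. -/
def cpR (G : SimpleGraph V) [DecidableRel G.Adj] (h : ℕ) (α : Finset V → V → ℝ)
    (u : V) : ℝ :=
  ∑ ψ ∈ (cliquesIn G h Finset.univ).filter (fun ψ => u ∈ ψ), α ψ u

/-- `α` is an optimal solution to `CP(G,h)`: it is feasible and minimizes
`Σ_u r(u)²` over all feasible solutions. -/
def CPOptimal (G : SimpleGraph V) [DecidableRel G.Adj] (h : ℕ)
    (α : Finset V → V → ℝ) : Prop :=
  CPFeasible G h α ∧
    ∀ β : Finset V → V → ℝ, CPFeasible G h β →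
      ∑ u : V, (cpR G h α u) ^ 2 ≤ ∑ u : V, (cpR G h β u) ^ 2

lemma mem_cliquesIn {G : SimpleGraph V} [DecidableRel G.Adj] {h : ℕ} {S : Finset V}
    {c : Finset V} : c ∈ cliquesIn G h S ↔ G.IsNClique h c ∧ c ⊆ S := by
  simp [cliquesIn]

lemma cliquesIn_mono (G : SimpleGraph V) [DecidableRel G.Adj] (h : ℕ) {S T : Finset V}
    (hST : S ⊆ T) : cliquesIn G h S ⊆ cliquesIn G h T := by
  intro c hc
  rw [mem_cliquesIn] at *
  exact ⟨hc.1, hc.2.trans hST⟩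

lemma cliquesIn_empty (G : SimpleGraph V) [DecidableRel G.Adj] {h : ℕ} (hh : 2 ≤ h) :
    cliquesIn G h (∅ : Finset V) = ∅ := by
  ext c
  simp only [mem_cliquesIn, Finset.notMem_empty, iff_false, not_and, Finset.subset_empty]
  rintro hc rfl
  have := hc.2
  simp at this
  omega

lemma compactSet_bddAbove (G : SimpleGraph V) [DecidableRel G.Adj] (h : ℕ) (u : V) :
    BddAbove {ρ : ℝ | 0 ≤ ρ ∧ ∃ S : Finset V, u ∈ S ∧ IsCliqueCompact G h ρ S} := by
  refine ⟨((cliquesIn G h Finset.univ).card : ℝ), ?_⟩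
  rintro ρ ⟨hρ0, S, huS, hne, _, hcomp⟩
  obtain ⟨x, hx⟩ := hne
  have h1 := hcomp {x} (Finset.singleton_subset_iff.2 hx) ⟨x, Finset.mem_singleton_self x⟩
  simp only [Finset.card_singleton, Nat.cast_one, mul_one] at h1
  have h2 : ((cliquesIn G h (S \ {x})).card : ℝ) ≥ 0 := Nat.cast_nonneg _
  have h3 : ((cliquesIn G h S).card : ℝ) ≤ ((cliquesIn G h Finset.univ).card : ℝ) := by
    exact_mod_cast Finset.card_le_card (cliquesIn_mono G h (Finset.subset_univ S))
  linarith

lemma le_compactNumber (G : SimpleGraph V) [DecidableRel G.Adj] (h : ℕ) {u : V}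
    {ρ : ℝ} {S : Finset V} (hρ0 : 0 ≤ ρ) (huS : u ∈ S)
    (hcomp : IsCliqueCompact G h ρ S) : ρ ≤ compactNumber G h u :=
  le_csSup (compactSet_bddAbove G h u) ⟨hρ0, S, huS, hcomp⟩

/-- If `(u,v) ∈ E` and `φ_h(u) > φ_h(v)`, then `v` belongs to no
locally `h`-clique densest subgraph of `G`. -/
theorem stmt_13 (G : SimpleGraph V) [DecidableRel G.Adj] (h : ℕ) (hh : 2 ≤ h)
    (u v : V) (hadj : G.Adj u v)
    (hlt : compactNumber G h v < compactNumber G h u) :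
    ¬ ∃ S : Finset V, IsLhCDS G h S ∧ v ∈ S := by
  rintro ⟨S, ⟨hScomp, hSmax⟩, hvS⟩
  set ρ : ℝ := cliqueDensity G h S with hρdef
  have hρ0 : 0 ≤ ρ := div_nonneg (Nat.cast_nonneg _) (Nat.cast_nonneg _)
  -- φ(v) ≥ ρ
  have hφv : ρ ≤ compactNumber G h v := le_compactNumber G h hρ0 hvS hScomp
  -- the set defining φ(u) is nonempty
  have hset : {ρ' : ℝ | 0 ≤ ρ' ∧ ∃ T : Finset V, u ∈ T ∧ IsCliqueCompact G h ρ' T}.Nonempty := by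
    by_contra hempty
    rw [Set.not_nonempty_iff_eq_empty] at hempty
    have : compactNumber G h u = 0 := by rw [compactNumber, hempty, Real.sSup_empty]
    linarith
  obtain ⟨ρ', ⟨hρ'0, T, huT, hTcomp⟩, hρ' : ρ < ρ'⟩ :=
    exists_lt_of_lt_csSup hset (lt_of_le_of_lt hφv hlt)
  obtain ⟨hSne, hSconn, hSineq⟩ := hScomp
  obtain ⟨hTne, hTconn, hTineq⟩ := hTcomp
  have hScard : (0 : ℝ) < (S.card : ℝ) := by
    exact_mod_cast Finset.card_pos.2 hSne
  have hρS : ρ * (S.card : ℝ) = ((cliquesIn G h S).card : ℝ) := by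
    rw [hρdef, cliqueDensity, div_mul_cancel₀]
    exact ne_of_gt hScard
  by_cases hTS : T ⊆ S
  · -- T ⊆ S leads to a density contradiction
    have hT : ρ' * (T.card : ℝ) ≤ ((cliquesIn G h T).card : ℝ) := by
      have := hTineq T (Finset.Subset.refl T) hTne
      rwa [Finset.sdiff_self, cliquesIn_empty G hh, Finset.card_empty, Nat.cast_zero,
        sub_zero] at this
    have hST2 : ρ * ((S \ T).card : ℝ) ≤
        ((cliquesIn G h S).card : ℝ) - ((cliquesIn G h T).card : ℝ) := by
      rcases Finset.eq_empty_or_nonempty (S \ T) with he | hne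
      · have : S = T := Finset.Subset.antisymm (by
          intro x hx
          by_contra hxT
          exact Finset.notMem_empty x (he ▸ Finset.mem_sdiff.2 ⟨hx, hxT⟩)) hTS
        rw [he, this]; simp
      · have := hSineq (S \ T) (Finset.sdiff_subset) hne
        rwa [Finset.sdiff_sdiff_self_left, Finset.inter_eq_right.2 hTS] at this
    have hcard : ((S \ T).card : ℝ) = (S.card : ℝ) - (T.card : ℝ) :=
      Finset.cast_card_sdiff hTS
    have hTcard : (0 : ℝ) < (T.card : ℝ) := by
      exact_mod_cast Finset.card_pos.2 hTne
    nlinarith [hT, hST2, hρS, hcard]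
  · -- otherwise S ∪ T is a strictly larger ρ-compact set
    obtain ⟨x, hxT, hxS⟩ := Finset.not_subset.1 hTS
    apply hSmax
    refine ⟨S ∪ T, ?_, ?_, ?_, ?_⟩
    · exact Finset.ssubset_iff_of_subset (Finset.subset_union_left) |>.2
        ⟨x, Finset.mem_union_right _ hxT, hxS⟩
    · exact hSne.mono Finset.subset_union_left
    · rw [Finset.coe_union]
      exact SimpleGraph.connected_induce_union hSconn.preconnected hTconn.preconnected hvS huT hadj.symm
    · intro U hU hUne
      set U1 : Finset V := U ∩ T with hU1def
      set U2 : Finset V := U \ T with hU2def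
      set A : Finset (Finset V) := cliquesIn G h T \ cliquesIn G h (T \ U1) with hAdef
      set B : Finset (Finset V) := cliquesIn G h S \ cliquesIn G h (S \ U2) with hBdef
      have hA : ρ' * (U1.card : ℝ) ≤ (A.card : ℝ) := by
        rcases Finset.eq_empty_or_nonempty U1 with he | hne
        · rw [he, hAdef, he]
          simp
        · have h1 := hTineq U1 (hU1def ▸ Finset.inter_subset_right) hne
          have h2 : (A.card : ℝ) = ((cliquesIn G h T).card : ℝ) -
              ((cliquesIn G h (T \ U1)).card : ℝ) := by
            rw [hAdef, Finset.card_sdiff_of_subset (cliquesIn_mono G h Finset.sdiff_subset)]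
            rw [Nat.cast_sub (Finset.card_le_card (cliquesIn_mono G h Finset.sdiff_subset))]
          linarith
      have hB : ρ * (U2.card : ℝ) ≤ (B.card : ℝ) := by
        rcases Finset.eq_empty_or_nonempty U2 with he | hne
        · rw [he, hBdef, he]
          simp
        · have h1 := hSineq U2 (by
            intro y hy
            obtain ⟨hyU, hyT⟩ := Finset.mem_sdiff.1 hy
            rcases Finset.mem_union.1 (hU hyU) with h' | h'
            · exact h'
            · exact absurd h' hyT) hne
          have h2 : (B.card : ℝ) = ((cliquesIn G h S).card : ℝ) -
              ((cliquesIn G h (S \ U2)).card : ℝ) := by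
            rw [hBdef, Finset.card_sdiff_of_subset (cliquesIn_mono G h Finset.sdiff_subset)]
            rw [Nat.cast_sub (Finset.card_le_card (cliquesIn_mono G h Finset.sdiff_subset))]
          linarith
      have hdisj : Disjoint A B := by
        rw [Finset.disjoint_left]
        intro c hcA hcB
        obtain ⟨hcT, _⟩ := Finset.mem_sdiff.1 hcA
        obtain ⟨hcS, hcnS⟩ := Finset.mem_sdiff.1 hcB
        obtain ⟨hclq, hcsubT⟩ := mem_cliquesIn.1 hcT
        obtain ⟨_, hcsubS⟩ := mem_cliquesIn.1 hcS
        exact hcnS (mem_cliquesIn.2 ⟨hclq, fun y hy => Finset.mem_sdiff.2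
          ⟨hcsubS hy, fun hyU2 => (Finset.mem_sdiff.1 hyU2).2 (hcsubT hy)⟩⟩)
      have hsub : A ∪ B ⊆ cliquesIn G h (S ∪ T) \ cliquesIn G h ((S ∪ T) \ U) := by
        intro c hc
        rcases Finset.mem_union.1 hc with hcA | hcB
        · obtain ⟨hcT, hcn⟩ := Finset.mem_sdiff.1 hcA
          obtain ⟨hclq, hcsubT⟩ := mem_cliquesIn.1 hcT
          refine Finset.mem_sdiff.2 ⟨mem_cliquesIn.2
            ⟨hclq, hcsubT.trans Finset.subset_union_right⟩, fun hmem => ?_⟩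
          obtain ⟨_, hcsub⟩ := mem_cliquesIn.1 hmem
          refine hcn (mem_cliquesIn.2 ⟨hclq, fun y hy => Finset.mem_sdiff.2
            ⟨hcsubT hy, fun hyU1 => ?_⟩⟩)
          exact (Finset.mem_sdiff.1 (hcsub hy)).2 (Finset.mem_inter.1 hyU1).1
        · obtain ⟨hcS, hcn⟩ := Finset.mem_sdiff.1 hcB
          obtain ⟨hclq, hcsubS⟩ := mem_cliquesIn.1 hcS
          refine Finset.mem_sdiff.2 ⟨mem_cliquesIn.2
            ⟨hclq, hcsubS.trans Finset.subset_union_left⟩, fun hmem => ?_⟩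
          obtain ⟨_, hcsub⟩ := mem_cliquesIn.1 hmem
          refine hcn (mem_cliquesIn.2 ⟨hclq, fun y hy => Finset.mem_sdiff.2
            ⟨hcsubS hy, fun hyU2 => ?_⟩⟩)
          exact (Finset.mem_sdiff.1 (hcsub hy)).2 (Finset.mem_sdiff.1 hyU2).1
      have hcardUnion : (A.card : ℝ) + (B.card : ℝ) ≤
          ((cliquesIn G h (S ∪ T)).card : ℝ) - ((cliquesIn G h ((S ∪ T) \ U)).card : ℝ) := by
        have h1 : A.card + B.card = (A ∪ B).card := (Finset.card_union_of_disjoint hdisj).symm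
        have h2 : (A ∪ B).card ≤ (cliquesIn G h (S ∪ T) \ cliquesIn G h ((S ∪ T) \ U)).card :=
          Finset.card_le_card hsub
        have h3 : (cliquesIn G h (S ∪ T) \ cliquesIn G h ((S ∪ T) \ U)).card =
            (cliquesIn G h (S ∪ T)).card - (cliquesIn G h ((S ∪ T) \ U)).card :=
          Finset.card_sdiff_of_subset (cliquesIn_mono G h Finset.sdiff_subset)
        have h4 : (cliquesIn G h ((S ∪ T) \ U)).card ≤ (cliquesIn G h (S ∪ T)).card :=
          Finset.card_le_card (cliquesIn_mono G h Finset.sdiff_subset)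
        calc ((A.card : ℝ) + B.card) = ((A ∪ B).card : ℝ) := by exact_mod_cast h1
          _ ≤ ((cliquesIn G h (S ∪ T) \ cliquesIn G h ((S ∪ T) \ U)).card : ℝ) := by
              exact_mod_cast h2
          _ = _ := by rw [h3, Nat.cast_sub h4]
      have hUcard : (U1.card : ℝ) + (U2.card : ℝ) = (U.card : ℝ) := by
        exact_mod_cast Finset.card_inter_add_card_sdiff U T
      have hU1nn : (0 : ℝ) ≤ (U1.card : ℝ) := Nat.cast_nonneg _
      nlinarith [hA, hB, hcardUnion, hUcard]
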